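/- Let G be a split graph with clique C and independent set I, and let \sigma = (v_1, ..., v_n) be an ordering of V satisfying the MNS 3-point condition. Suppose some vertex v_i \in I appears before some vertex v_j \in C (i < j), and let l = |{v_1, ..., v_{i-1}} \cap C|. Then the vertices v_{i+1}, ..., v_{deg(v_i) - l + i} are all neighbors of v_i, i.e., all remaining neighbors of v_i are chosen consecutively directly after v_i. -/
import Mathlib


/-- Lemma 6(2): in an MNS ordering of a split graph, if an independent-set vertex `v_i`
appears before some clique vertex, then the `deg(v_i) - l` vertices following `v_i`
(where `l` is the number of clique vertices before `v_i`) are all neighbors of `v_i`. -/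
theorem mns_split_remaining_neighbors_consecutive {V : Type*} [Fintype V]
    (G : SimpleGraph V) (C I : Set V)
    (hpart : ∀ x : V, (x ∈ C ∨ x ∈ I) ∧ ¬ (x ∈ C ∧ x ∈ I))
    (hC : G.IsClique C) (hI : ∀ a ∈ I, ∀ b ∈ I, ¬ G.Adj a b)
    (σ : Fin (Fintype.card V) ≃ V)
    (hmns : ∀ a b c : Fin (Fintype.card V), a < b → b < c →
      G.Adj (σ a) (σ c) → ¬ G.Adj (σ a) (σ b) →
      ∃ d, d < b ∧ G.Adj (σ d) (σ b) ∧ ¬ G.Adj (σ d) (σ c)) :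
    ∀ i j : Fin (Fintype.card V), i < j → σ i ∈ I → σ j ∈ C →
      ∀ m : Fin (Fintype.card V), i < m →
        (m : ℕ) ≤ (i : ℕ) + ((G.neighborSet (σ i)).ncard -
          ({k : Fin (Fintype.card V) | k < i ∧ σ k ∈ C}).ncard) →
        G.Adj (σ i) (σ m) := by
  -- key lemma: no "bad triple" a < b < c with σ a ∈ I, ¬adj(a,b), adj(a,c)
  have key : ∀ N : ℕ, ∀ b : Fin (Fintype.card V), (b : ℕ) < N → ∀ a c : Fin (Fintype.card V), a < b → b < c →
      σ a ∈ I → ¬ G.Adj (σ a) (σ b) → G.Adj (σ a) (σ c) → False := by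
    intro N
    induction N with
    | zero => intro b hb; omega
    | succ N ih =>
      intro b hb a c hab hbc haI hnab hac
      obtain ⟨d, hdb, hadj_db, hnadj_dc⟩ := hmns a b c hab hbc hac hnab
      have hcC : σ c ∈ C := by
        rcases (hpart (σ c)).1 with h | h
        · exact h
        · exact absurd hac (hI _ haI _ h)
      have hdI : σ d ∈ I := by
        rcases (hpart (σ d)).1 with h | h
        · exfalso
          apply hnadj_dc
          exact hC h hcC (fun he => absurd (σ.injective he) (by
            intro h'; exact absurd h' (ne_of_lt (lt_trans hdb hbc))))
        · exact h
      rcases lt_trichotomy d a with hda | hda | hda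
      · -- triple (d, a, b), middle a < b ≤ N
        have hna : ¬ G.Adj (σ d) (σ a) := hI _ hdI _ haI
        exact ih a (by have := hab; have := hb; omega) d b hda hab hdI hna hadj_db
      · rw [hda] at hadj_db; exact hnab hadj_db
      · -- triple (a, d, c), middle d < b ≤ N
        have hnd : ¬ G.Adj (σ a) (σ d) := fun h => hI _ haI _ hdI h
        exact ih d (by have := hdb; have := hb; omega) a c hda (lt_trans hdb hbc)
          haI hnd hac
  intro i j hij hiI hjC m him hm
  by_contra hnadj
  -- it suffices to find c > m with G.Adj (σ i) (σ c)
  suffices h : ∃ c : Fin (Fintype.card V), m < c ∧ G.Adj (σ i) (σ c) by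
    obtain ⟨c, hmc, hc⟩ := h
    exact key ((m : ℕ) + 1) m (by omega) i c him hmc hiI hnadj hc
  by_contra hno
  push_neg at hno
  -- counting argument
  set A : Set (Fin (Fintype.card V)) := {k | k < i ∧ G.Adj (σ i) (σ k)} with hA
  set B : Set (Fin (Fintype.card V)) := {k | i < k ∧ G.Adj (σ i) (σ k)} with hB
  have himg : G.neighborSet (σ i) = σ '' (A ∪ B) := by
    ext v
    simp only [SimpleGraph.mem_neighborSet, Set.mem_image, Set.mem_union, hA, hB,
      Set.mem_setOf_eq]
    constructor
    · intro hv
      refine ⟨σ.symm v, ?_, by simp⟩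
      have hadj : G.Adj (σ i) (σ (σ.symm v)) := by simpa using hv
      rcases lt_trichotomy (σ.symm v) i with h | h | h
      · exact Or.inl ⟨h, hadj⟩
      · exfalso; rw [h] at hadj; exact G.irrefl hadj
      · exact Or.inr ⟨h, hadj⟩
    · rintro ⟨k, hk, rfl⟩
      rcases hk with ⟨_, h⟩ | ⟨_, h⟩ <;> exact h
  have hdisj : Disjoint A B := by
    rw [Set.disjoint_left]
    rintro k ⟨hk1, _⟩ ⟨hk2, _⟩
    exact absurd (lt_trans hk1 hk2) (lt_irrefl _)
  have hcard : (G.neighborSet (σ i)).ncard = A.ncard + B.ncard := by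
    rw [himg, Set.ncard_image_of_injective _ σ.injective,
      Set.ncard_union_eq hdisj (Set.toFinite _) (Set.toFinite _)]
  have hAle : A.ncard ≤ ({k : Fin (Fintype.card V) | k < i ∧ σ k ∈ C}).ncard := by
    apply Set.ncard_le_ncard _ (Set.toFinite _)
    rintro k ⟨hk, hadj⟩
    refine ⟨hk, ?_⟩
    rcases (hpart (σ k)).1 with h | h
    · exact h
    · exact absurd hadj (hI _ hiI _ h)
  have hBle : B.ncard ≤ (m : ℕ) - (i : ℕ) - 1 := by
    have hsub : B ⊆ ↑(Finset.Ioo i m) := by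
      rintro k ⟨hik, hadj⟩
      simp only [Finset.coe_Ioo, Set.mem_Ioo]
      refine ⟨hik, ?_⟩
      by_contra h
      push_neg at h
      rcases eq_or_lt_of_le h with h' | h'
      · rw [← h'] at hadj; exact hnadj hadj
      · exact absurd hadj (hno k h')
    calc B.ncard ≤ (↑(Finset.Ioo i m) : Set (Fin (Fintype.card V))).ncard :=
          Set.ncard_le_ncard hsub (Set.toFinite _)
      _ = (Finset.Ioo i m).card := Set.ncard_coe_finset _
      _ = (m : ℕ) - (i : ℕ) - 1 := by rw [Fin.card_Ioo]
  have hlt : (i : ℕ) < (m : ℕ) := him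
  omega
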